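/- For every real s > 0 and t ∈ ℚ₂, the integral I₁(s,t) := ∫_{ℚ₂} (∫_{M₁} ψ(b·x₁x₂) d(μ×μ)) · ψ(−t·b) · min(1, ‖b‖⁻¹)^s dμ(b) converges absolutely and equals: 0 if ‖t‖ > 1; (1/2)(1 − 2^{−s}) if ‖t‖ = 1; and (1/2)(1 + 2^{−s}) if ‖t‖ ≤ 1/2. (This is the normalized local Whittaker function W_{tα}(s, φ₁)/γ(W) of Lemma 5.5(2), with the 2-adic unit α absorbed into t.) -/

import Mathlib

set_option linter.unusedSectionVars false
set_option maxHeartbeats 1000000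

open MeasureTheory Set ENNReal

/-- `M_a = {(x₁,x₂) ∈ ℤ₂² : x₁ + x₂ ≡ a (mod 2)}` from the proof of Lemma 5.5. -/
def Mset (a : ℕ) : Set (ℚ_[2] × ℚ_[2]) :=
  {p | ‖p.1‖ ≤ 1 ∧ ‖p.2‖ ≤ 1 ∧ ‖p.1 + p.2 - (a : ℚ_[2])‖ ≤ 1 / 2}

namespace S13

noncomputable section

/-- closed ball of radius `r` in `ℚ₂`. -/
def Z (r : ℝ) : Set ℚ_[2] := {x | ‖x‖ ≤ r}

lemma mem_Z {r : ℝ} {x : ℚ_[2]} : x ∈ Z r ↔ ‖x‖ ≤ r := Iff.rfl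

lemma ultra (x y : ℚ_[2]) : ‖x + y‖ ≤ max ‖x‖ ‖y‖ := Padic.nonarchimedean x y

lemma ultra_sub (x y : ℚ_[2]) : ‖x - y‖ ≤ max ‖x‖ ‖y‖ := by
  have := ultra x (-y)
  simpa [sub_eq_add_neg] using this

lemma norm_two : ‖(2 : ℚ_[2])‖ = 2⁻¹ := by
  simpa using Padic.norm_p (p := 2)

lemma disc {x : ℚ_[2]} {n : ℤ} (h : ‖x‖ < 2 ^ (n + 1)) : ‖x‖ ≤ 2 ^ n := by
  have h2 : ((2:ℕ):ℝ) = (2:ℝ) := by norm_num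
  have := (Padic.norm_le_pow_iff_norm_lt_pow_add_one x n)
  rw [h2] at this
  exact this.mpr h

lemma disc_one {x : ℚ_[2]} (h : ‖x‖ < 2) : ‖x‖ ≤ 1 := by
  have := disc (x := x) (n := 0) (by norm_num [h])
  simpa using this

lemma disc_half {x : ℚ_[2]} (h : ‖x‖ < 1) : ‖x‖ ≤ 1 / 2 := by
  have := disc (x := x) (n := -1) (by norm_num [h])
  norm_num at this ⊢
  linarith

lemma disc_two {x : ℚ_[2]} (h : ‖x‖ < 4) : ‖x‖ ≤ 2 := by
  have := disc (x := x) (n := 1) (by norm_num; exact h)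
  simpa using this

/-- every 2-adic integer is congruent to 0 or 1 mod 2 -/
lemma parity {x : ℚ_[2]} (hx : ‖x‖ ≤ 1) : ‖x‖ ≤ 1 / 2 ∨ ‖x - 1‖ ≤ 1 / 2 := by
  set z : ℤ_[2] := ⟨x, hx⟩ with hz
  obtain ⟨n, hn2, hnm⟩ := PadicInt.exists_mem_range z
  rw [PadicInt.maximalIdeal_eq_span_p, Ideal.mem_span_singleton,
    ← PadicInt.norm_lt_one_iff_dvd] at hnm
  have hq : ‖x - (n : ℚ_[2])‖ < 1 := by
    have : ((z - (n : ℤ_[2]) : ℤ_[2]) : ℚ_[2]) = x - (n : ℚ_[2]) := by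
      push_cast
      rfl
    rw [PadicInt.norm_def, this] at hnm
    exact hnm
  interval_cases n
  · left
    exact disc_half (by simpa using hq)
  · right
    exact disc_half (by simpa using hq)

section Psi

variable {ψ : ℚ_[2] → ℂ}

lemma psi_pow (hψadd : ∀ x y : ℚ_[2], ψ (x + y) = ψ x * ψ y) (x : ℚ_[2]) (n : ℕ) :
    ψ ((2 ^ n : ℚ_[2]) * x) = ψ x ^ (2 ^ n : ℕ) := by
  induction n with
  | zero => simp
  | succ n ih =>
      have h1 : (2 ^ (n + 1) : ℚ_[2]) * x = (2 ^ n : ℚ_[2]) * x + (2 ^ n : ℚ_[2]) * x := by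
        ring
      rw [h1, hψadd, ih, ← pow_add]
      congr 1
      ring

lemma psi_norm_one (hψadd : ∀ x y : ℚ_[2], ψ (x + y) = ψ x * ψ y)
    (hψtriv : ∀ x : ℚ_[2], ‖x‖ ≤ 1 → ψ x = 1) (x : ℚ_[2]) : ‖ψ x‖ = 1 := by
  obtain ⟨n, hn⟩ : ∃ n : ℕ, ‖(2 ^ n : ℚ_[2]) * x‖ ≤ 1 := by
    obtain ⟨n, hn⟩ := pow_unbounded_of_one_lt ‖x‖ (by norm_num : (1:ℝ) < 2)
    refine ⟨n, ?_⟩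
    have : ‖(2 ^ n : ℚ_[2]) * x‖ = (2⁻¹) ^ n * ‖x‖ := by
      rw [norm_mul, norm_pow, norm_two]
    rw [this]
    rw [inv_pow]
    rw [inv_mul_le_iff₀ (by positivity)]
    simpa [mul_comm] using hn.le
  have h1 : ψ x ^ (2 ^ n : ℕ) = 1 := by
    rw [← psi_pow hψadd, hψtriv _ hn]
  have h2 : ‖ψ x‖ ^ (2 ^ n : ℕ) = 1 := by
    rw [← norm_pow, h1, norm_one]
  rcases lt_trichotomy ‖ψ x‖ 1 with h | h | h
  · exfalso
    have := pow_lt_one₀ (norm_nonneg _) h (by positivity : (2:ℕ)^n ≠ 0)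
    rw [h2] at this; exact lt_irrefl _ this
  · exact h
  · exfalso
    have := one_lt_pow₀ h (by positivity : (2:ℕ)^n ≠ 0)
    rw [h2] at this; exact lt_irrefl _ this

end Psi

section Meas

variable [MeasurableSpace ℚ_[2]] [BorelSpace ℚ_[2]]

lemma measZ (r : ℝ) : MeasurableSet (Z r) :=
  (isClosed_le continuous_norm continuous_const).measurableSet

lemma measW (a : ℚ_[2]) (r : ℝ) : MeasurableSet {x : ℚ_[2] | ‖x - a‖ ≤ r} :=
  (isClosed_le (continuous_norm.comp (continuous_sub_right a)) continuous_const).measurableSet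

variable (μ : Measure ℚ_[2]) [μ.IsAddHaarMeasure]

lemma measure_ball_eq (a : ℚ_[2]) (r : ℝ) : μ {x : ℚ_[2] | ‖x - a‖ ≤ r} = μ (Z r) := by
  have : {x : ℚ_[2] | ‖x - a‖ ≤ r} = (fun x => -a + x) ⁻¹' (Z r) := by
    ext x
    simp [mem_Z, neg_add_eq_sub]
  rw [this, measure_preimage_add]

variable (hμ : μ {x : ℚ_[2] | ‖x‖ ≤ 1} = 1)

include hμ

lemma measure_Z_one : μ (Z 1) = 1 := hμ

lemma measure_Z_half : μ (Z (1/2)) = 1/2 := by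
  have hsplit : Z 1 = Z (1/2) ∪ {x : ℚ_[2] | ‖x - 1‖ ≤ 1/2} := by
    ext x
    constructor
    · intro hx; exact parity hx
    · rintro (hx | hx)
      · exact mem_Z.2 (le_trans (mem_Z.1 hx) (by norm_num))
      · have h2 := ultra_sub (x - 1) (-(1:ℚ_[2]))
        simp only [sub_neg_eq_add, sub_add_cancel] at h2
        exact mem_Z.2 (le_trans h2 (max_le (le_trans hx (by norm_num)) (by simp)))
  have hdisj : Disjoint (Z (1/2)) {x : ℚ_[2] | ‖x - 1‖ ≤ 1/2} := by
    rw [Set.disjoint_left]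
    intro x hx1 hx2
    have h3 := ultra_sub (x : ℚ_[2]) (x - 1)
    have h3' : x - (x-1) = (1:ℚ_[2]) := by ring
    rw [h3'] at h3
    have h4 : ‖(1:ℚ_[2])‖ ≤ 1/2 := le_trans h3 (max_le hx1 hx2)
    norm_num at h4
  have h1 : μ (Z 1) = μ (Z (1/2)) + μ {x : ℚ_[2] | ‖x - 1‖ ≤ 1/2} := by
    rw [hsplit, measure_union hdisj (measW 1 (1/2))]
  rw [measure_Z_one μ hμ, measure_ball_eq] at h1
  have h2 : (2:ℝ≥0∞) * μ (Z (1/2)) = 1 := by rw [two_mul]; exact h1.symm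
  calc μ (Z (1/2)) = 2⁻¹ * (2 * μ (Z (1/2))) := by
        rw [← mul_assoc, ENNReal.inv_mul_cancel two_ne_zero ENNReal.ofNat_ne_top, one_mul]
    _ = 1/2 := by rw [h2, mul_one, one_div]

lemma measure_Z_two : μ (Z 2) = 2 := by
  have hsplit : Z 2 = Z 1 ∪ {x : ℚ_[2] | ‖x - 2⁻¹‖ ≤ 1} := by
    ext x
    constructor
    · intro hx
      by_cases h1 : ‖x‖ ≤ 1
      · exact Or.inl h1
      · right
        have h2x : ‖(2:ℚ_[2]) * x‖ ≤ 1 := by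
          rw [norm_mul, norm_two]
          calc (2:ℝ)⁻¹ * ‖x‖ ≤ 2⁻¹ * 2 := by
                have := mem_Z.1 hx
                nlinarith [this]
            _ = 1 := by norm_num
        rcases parity h2x with h | h
        · exfalso
          rw [norm_mul, norm_two] at h
          have : ‖x‖ ≤ 1 := by nlinarith
          exact h1 this
        · have heq : x - 2⁻¹ = 2⁻¹ * ((2:ℚ_[2]) * x - 1) := by
            field_simp
          show ‖x - 2⁻¹‖ ≤ 1
          rw [heq, norm_mul, norm_inv, norm_two]
          norm_num
          nlinarith
    · rintro (hx | hx)
      · exact mem_Z.2 (le_trans (mem_Z.1 hx) (by norm_num))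
      · have h2 := ultra_sub (x - 2⁻¹) (-(2⁻¹:ℚ_[2]))
        have h3 : x - 2⁻¹ - -2⁻¹ = x := by ring
        rw [h3] at h2
        refine mem_Z.2 (le_trans h2 (max_le (le_trans hx (by norm_num)) ?_))
        rw [norm_neg, norm_inv, norm_two]
        norm_num
  have hdisj : Disjoint (Z 1) {x : ℚ_[2] | ‖x - 2⁻¹‖ ≤ 1} := by
    rw [Set.disjoint_left]
    intro x hx1 hx2
    have h3 := ultra_sub (x : ℚ_[2]) (x - 2⁻¹)
    have h3' : x - (x - 2⁻¹) = (2⁻¹:ℚ_[2]) := by ring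
    rw [h3'] at h3
    have h4 : ‖(2⁻¹:ℚ_[2])‖ ≤ 1 := le_trans h3 (max_le hx1 hx2)
    rw [norm_inv, norm_two] at h4
    norm_num at h4
  have h1 : μ (Z 2) = μ (Z 1) + μ {x : ℚ_[2] | ‖x - 2⁻¹‖ ≤ 1} := by
    rw [hsplit, measure_union hdisj (measW 2⁻¹ 1)]
  rw [measure_ball_eq, measure_Z_one μ hμ] at h1
  rw [h1]
  norm_num

omit hμ

lemma measure_Z_lt_top (r : ℝ) : μ (Z r) < ∞ := by
  have : Z r = Metric.closedBall 0 r := by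
    ext x
    simp [mem_Z, Metric.mem_closedBall, dist_eq_norm]
  rw [this]
  exact (ProperSpace.isCompact_closedBall 0 r).measure_lt_top

end Meas

section Int

variable [MeasurableSpace ℚ_[2]] [BorelSpace ℚ_[2]]
variable (μ : Measure ℚ_[2]) [μ.IsAddHaarMeasure]
variable {ψ : ℚ_[2] → ℂ}

lemma shift_setIntegral (f : ℚ_[2] → ℂ) (a : ℚ_[2]) (r : ℝ) :
    ∫ x in {y : ℚ_[2] | ‖y - a‖ ≤ r}, f x ∂μ = ∫ x in Z r, f (a + x) ∂μ := by
  rw [← integral_indicator (measW a r), ← integral_indicator (measZ r)]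
  rw [← integral_add_left_eq_self (fun x => Set.indicator {y : ℚ_[2] | ‖y - a‖ ≤ r} f x) a]
  congr 1
  funext x
  simp only [Set.indicator, mem_setOf_eq, mem_Z, add_sub_cancel_left]

lemma inv2c_le {c : ℚ_[2]} {r : ℝ} (hr : 0 < r) (hge : 2 / r ≤ ‖c‖) : ‖(2 * c)⁻¹‖ ≤ r := by
  have hc : 0 < ‖c‖ := lt_of_lt_of_le (by positivity) hge
  rw [norm_inv, norm_mul, norm_two, mul_inv, inv_inv]
  have h2 : 2 ≤ ‖c‖ * r := by
    rw [div_le_iff₀ hr] at hge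
    linarith
  have h3 : ‖c‖ * ‖c‖⁻¹ = 1 := mul_inv_cancel₀ hc.ne'
  have h4 : (0:ℝ) < ‖c‖⁻¹ := inv_pos.2 hc
  nlinarith [mul_le_mul_of_nonneg_left h2 h4.le]

lemma int_vanish (hψadd : ∀ x y : ℚ_[2], ψ (x + y) = ψ x * ψ y)
    (hψhalf : ψ (2⁻¹ : ℚ_[2]) = -1)
    (c : ℚ_[2]) (hc : c ≠ 0) (r : ℝ) (hh : ‖(2 * c)⁻¹‖ ≤ r) :
    ∫ x in Z r, ψ (c * x) ∂μ = 0 := by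
  set h : ℚ_[2] := (2 * c)⁻¹ with hdef
  have hch : ψ (c * h) = -1 := by
    have hceq : c * h = 2⁻¹ := by rw [hdef]; field_simp
    rw [hceq, hψhalf]
  have hmem : ∀ x : ℚ_[2], x + h ∈ Z r ↔ x ∈ Z r := by
    intro x
    constructor
    · intro hx
      have h1 := ultra_sub (x + h) h
      have h2 : x + h - h = x := by ring
      rw [h2] at h1
      exact mem_Z.2 (le_trans h1 (max_le hx hh))
    · intro hx
      exact mem_Z.2 (le_trans (ultra x h) (max_le hx hh))
  have key : ∫ x, (Z r).indicator (fun y => ψ (c * y)) x ∂μ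
      = ψ (c * h) * ∫ x, (Z r).indicator (fun y => ψ (c * y)) x ∂μ := by
    conv_lhs => rw [← integral_add_right_eq_self ((Z r).indicator (fun y => ψ (c * y))) h]
    rw [← integral_const_mul]
    congr 1
    funext x
    by_cases hx : x ∈ Z r
    · rw [Set.indicator_of_mem ((hmem x).2 hx), Set.indicator_of_mem hx]
      rw [mul_add c x h, hψadd, mul_comm]
    · rw [Set.indicator_of_notMem (fun hmem' => hx ((hmem x).1 hmem')),
        Set.indicator_of_notMem hx, mul_zero]
  rw [← integral_indicator (measZ r)]
  rw [hch] at key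
  linear_combination key / 2

lemma int_const (hψtriv : ∀ x : ℚ_[2], ‖x‖ ≤ 1 → ψ x = 1)
    (c : ℚ_[2]) (r : ℝ) (h : ∀ x : ℚ_[2], ‖x‖ ≤ r → ‖c * x‖ ≤ 1) :
    ∫ x in Z r, ψ (c * x) ∂μ = ((μ (Z r)).toReal : ℂ) := by
  rw [setIntegral_congr_fun (measZ r) (g := fun _ => (1:ℂ)) (fun x hx => hψtriv _ (h x hx))]
  rw [setIntegral_const, Complex.real_smul, mul_one, measureReal_def]

variable (hψadd : ∀ x y : ℚ_[2], ψ (x + y) = ψ x * ψ y)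
  (hψtriv : ∀ x : ℚ_[2], ‖x‖ ≤ 1 → ψ x = 1)
  (hψhalf : ψ (2⁻¹ : ℚ_[2]) = -1)
  (hμ : μ {x : ℚ_[2] | ‖x‖ ≤ 1} = 1)

include hψadd hψtriv hψhalf hμ

lemma G1 (c : ℚ_[2]) :
    ∫ x in Z 1, ψ (c * x) ∂μ = if ‖c‖ ≤ 1 then 1 else 0 := by
  split_ifs with h
  · rw [int_const μ hψtriv c 1
      (fun x hx => by rw [norm_mul]; nlinarith [norm_nonneg x, norm_nonneg c])]
    rw [measure_Z_one μ hμ]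
    norm_num
  · have hc : c ≠ 0 := by
      intro h0; rw [h0] at h; simp at h
    have hge : 2 / 1 ≤ ‖c‖ := by
      by_contra hlt
      push_neg at hlt
      norm_num at hlt
      exact h (disc_one hlt)
    exact int_vanish μ hψadd hψhalf c hc 1 (inv2c_le one_pos hge)

lemma Gh (c : ℚ_[2]) :
    ∫ x in Z (1/2), ψ (c * x) ∂μ = if ‖c‖ ≤ 2 then (1/2 : ℂ) else 0 := by
  split_ifs with h
  · rw [int_const μ hψtriv c (1/2)
      (fun x hx => by rw [norm_mul]; nlinarith [norm_nonneg x, norm_nonneg c])]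
    rw [measure_Z_half μ hμ]
    norm_num
  · have hc : c ≠ 0 := by
      intro h0; rw [h0] at h; simp at h
    have hge : 2 / (1/2) ≤ ‖c‖ := by
      by_contra hlt
      push_neg at hlt
      norm_num at hlt
      exact h (disc_two hlt)
    exact int_vanish μ hψadd hψhalf c hc (1/2) (inv2c_le (by norm_num) hge)

lemma G2 (c : ℚ_[2]) :
    ∫ x in Z 2, ψ (c * x) ∂μ = if ‖c‖ ≤ 1/2 then (2 : ℂ) else 0 := by
  split_ifs with h
  · rw [int_const μ hψtriv c 2
      (fun x hx => by rw [norm_mul]; nlinarith [norm_nonneg x, norm_nonneg c])]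
    rw [measure_Z_two μ hμ]
    norm_num
  · have hc : c ≠ 0 := by
      intro h0; rw [h0] at h; simp at h
    have hge : 2 / 2 ≤ ‖c‖ := by
      by_contra hlt
      push_neg at hlt
      norm_num at hlt
      exact h (disc_half hlt)
    exact int_vanish μ hψadd hψhalf c hc 2 (inv2c_le (by norm_num) hge)

end Int

section J

variable [MeasurableSpace ℚ_[2]] [BorelSpace ℚ_[2]]
variable (μ : Measure ℚ_[2]) [μ.IsAddHaarMeasure] [SigmaFinite μ]
variable {ψ : ℚ_[2] → ℂ}

/-- odd 2-adic integers -/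
def W : Set ℚ_[2] := {x | ‖x - 1‖ ≤ 1/2}

lemma measW' : MeasurableSet W := measW 1 (1/2)

lemma norm_one_half : ¬ ‖(1:ℚ_[2])‖ ≤ 1/2 := by norm_num

lemma Mset_eq : Mset 1 = ((Z (1/2)) ×ˢ W) ∪ (W ×ˢ (Z (1/2))) := by
  ext p
  simp only [Mset, W, mem_setOf_eq, Set.mem_union, Set.mem_prod, mem_Z, Nat.cast_one]
  constructor
  · rintro ⟨h1, h2, h3⟩
    rcases parity h1 with h | h
    · left
      refine ⟨h, ?_⟩
      have he : p.2 - 1 = (p.1 + p.2 - 1) - p.1 := by ring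
      rw [he]
      exact le_trans (ultra_sub _ _) (max_le h3 h)
    · right
      refine ⟨h, ?_⟩
      have he : p.2 = (p.1 + p.2 - 1) - (p.1 - 1) := by ring
      rw [he]
      exact le_trans (ultra_sub _ _) (max_le h3 h)
  · rintro (⟨h1, h2⟩ | ⟨h1, h2⟩)
    · refine ⟨le_trans h1 (by norm_num), ?_, ?_⟩
      · have he : p.2 = (p.2 - 1) + 1 := by ring
        rw [he]
        exact le_trans (ultra _ _) (max_le (le_trans h2 (by norm_num)) (by simp))
      · have he : p.1 + p.2 - 1 = p.1 + (p.2 - 1) := by ring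
        rw [he]
        exact le_trans (ultra _ _) (max_le h1 h2)
    · refine ⟨?_, le_trans h2 (by norm_num), ?_⟩
      · have he : p.1 = (p.1 - 1) + 1 := by ring
        rw [he]
        exact le_trans (ultra _ _) (max_le (le_trans h1 (by norm_num)) (by simp))
      · have he : p.1 + p.2 - 1 = p.2 + (p.1 - 1) := by ring
        rw [he]
        exact le_trans (ultra _ _) (max_le h2 h1)

lemma Mdisj : Disjoint ((Z (1/2)) ×ˢ W) (W ×ˢ (Z (1/2))) := by
  rw [Set.disjoint_left]
  rintro p ⟨h1, _⟩ ⟨h3, _⟩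
  have he : (1:ℚ_[2]) = p.1 - (p.1 - 1) := by ring
  refine norm_one_half ?_
  rw [he]
  exact le_trans (ultra_sub _ _) (max_le h1 h3)

variable (hψcont : Continuous ψ)
  (hψadd : ∀ x y : ℚ_[2], ψ (x + y) = ψ x * ψ y)
  (hψtriv : ∀ x : ℚ_[2], ‖x‖ ≤ 1 → ψ x = 1)
  (hψhalf : ψ (2⁻¹ : ℚ_[2]) = -1)
  (hμ : μ {x : ℚ_[2] | ‖x‖ ≤ 1} = 1)

include hψcont hψadd hψtriv in
lemma int_piece (b : ℚ_[2]) (S T : Set ℚ_[2]) (hSf : μ S ≠ ∞) (hTf : μ T ≠ ∞) :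
    IntegrableOn (fun p : ℚ_[2] × ℚ_[2] => ψ (b * p.1 * p.2)) (S ×ˢ T) (μ.prod μ) := by
  apply Measure.integrableOn_of_bounded (M := 1)
  · rw [Measure.prod_prod]
    exact ENNReal.mul_ne_top hSf hTf
  · exact (hψcont.comp (by fun_prop)).aestronglyMeasurable
  · exact Filter.Eventually.of_forall fun p => le_of_eq (psi_norm_one hψadd hψtriv _)

include hψadd hψtriv hψhalf hμ in
lemma KA (b : ℚ_[2]) :
    (∫ x in Z (1/2), ∫ y in W, ψ (b * x * y) ∂μ ∂μ)
      = if ‖b‖ ≤ 2 then (1/4 : ℂ) else 0 := by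
  have hinner : ∀ x : ℚ_[2], (∫ y in W, ψ (b * x * y) ∂μ)
      = ψ (b * x) * (if ‖b * x‖ ≤ 2 then (1/2 : ℂ) else 0) := by
    intro x
    have h0 : (∫ y in W, ψ (b * x * y) ∂μ) = ∫ y in Z (1/2), ψ (b * x * (1 + y)) ∂μ :=
      shift_setIntegral μ (fun y => ψ (b * x * y)) 1 (1/2)
    rw [h0]
    have h1 : ∀ y ∈ Z (1/2), ψ (b * x * (1 + y)) = ψ (b * x) * ψ ((b * x) * y) := by
      intro y _
      rw [← hψadd]
      congr 1
      ring
    rw [setIntegral_congr_fun (measZ (1/2)) h1, integral_const_mul,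
      Gh μ hψadd hψtriv hψhalf hμ (b * x)]
  rw [setIntegral_congr_fun (measZ (1/2)) (fun x _ => hinner x)]
  by_cases hb4 : ‖b‖ ≤ 4
  · have h2 : ∀ x ∈ Z (1/2), ψ (b * x) * (if ‖b * x‖ ≤ 2 then (1/2 : ℂ) else 0)
        = (1/2 : ℂ) * ψ (b * x) := by
      intro x hx
      have : ‖b * x‖ ≤ 2 := by
        rw [norm_mul]
        nlinarith [norm_nonneg b, norm_nonneg x, mem_Z.1 hx]
      rw [if_pos this, mul_comm]
    rw [setIntegral_congr_fun (measZ (1/2)) h2, integral_const_mul,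
      Gh μ hψadd hψtriv hψhalf hμ b]
    split_ifs <;> norm_num
  · push_neg at hb4
    have hbpos : (0:ℝ) < ‖b‖ := by linarith
    have hbne : b ≠ 0 := by
      intro h0; rw [h0] at hb4; simp at hb4; linarith
    set r : ℝ := 2 / ‖b‖ with hr_def
    have hr : 0 < r := by positivity
    have hrle : r ≤ 1/2 := by
      rw [hr_def, div_le_iff₀ hbpos]
      linarith
    have h2 : ∀ x ∈ Z (1/2), ψ (b * x) * (if ‖b * x‖ ≤ 2 then (1/2 : ℂ) else 0)
        = (Z r).indicator (fun x => (1/2 : ℂ) * ψ (b * x)) x := by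
      intro x _
      by_cases hx : x ∈ Z r
      · have hle : ‖b * x‖ ≤ 2 := by
          rw [norm_mul]
          have := mem_Z.1 hx
          calc ‖b‖ * ‖x‖ ≤ ‖b‖ * r := by nlinarith [norm_nonneg x]
            _ = 2 := by rw [hr_def]; field_simp
        rw [if_pos hle, Set.indicator_of_mem hx, mul_comm]
      · have hgt : ¬ ‖b * x‖ ≤ 2 := by
          rw [norm_mul]
          push_neg
          have hxgt : r < ‖x‖ := by
            by_contra hc
            push_neg at hc
            exact hx (mem_Z.2 hc)
          calc (2:ℝ) = ‖b‖ * r := by rw [hr_def]; field_simp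
            _ < ‖b‖ * ‖x‖ := by nlinarith
        rw [if_neg hgt, Set.indicator_of_notMem hx, mul_zero]
    rw [setIntegral_congr_fun (measZ (1/2)) h2, setIntegral_indicator (measZ r)]
    have hZsub : Z (1/2) ∩ Z r = Z r := by
      apply Set.inter_eq_self_of_subset_right
      intro x hx
      exact mem_Z.2 (le_trans (mem_Z.1 hx) hrle)
    rw [hZsub, integral_const_mul]
    have hvan : ∫ x in Z r, ψ (b * x) ∂μ = 0 := by
      apply int_vanish μ hψadd hψhalf b hbne r
      apply inv2c_le hr
      rw [hr_def]
      rw [div_div_eq_mul_div, mul_comm, mul_div_assoc, div_self (by norm_num : (2:ℝ) ≠ 0), mul_one]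
    rw [hvan, mul_zero, if_neg (by linarith)]

include hψcont hψadd hψtriv hψhalf hμ in
lemma Jval (b : ℚ_[2]) :
    (∫ p in Mset 1, ψ (b * p.1 * p.2) ∂(μ.prod μ)) = if ‖b‖ ≤ 2 then (1/2 : ℂ) else 0 := by
  have hμZh : μ (Z (1/2)) ≠ ∞ := (measure_Z_lt_top μ _).ne
  have hμW : μ W ≠ ∞ := by
    rw [show W = {x : ℚ_[2] | ‖x - 1‖ ≤ 1/2} from rfl, measure_ball_eq]
    exact (measure_Z_lt_top μ _).ne
  have hA := int_piece μ hψcont hψadd hψtriv b (Z (1/2)) W hμZh hμW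
  have hB := int_piece μ hψcont hψadd hψtriv b W (Z (1/2)) hμW hμZh
  rw [Mset_eq, setIntegral_union Mdisj (measW'.prod (measZ (1/2))) hA hB]
  have hKA := KA μ hψadd hψtriv hψhalf hμ b
  have hApart : (∫ p in (Z (1/2)) ×ˢ W, ψ (b * p.1 * p.2) ∂(μ.prod μ))
      = if ‖b‖ ≤ 2 then (1/4 : ℂ) else 0 := by
    rw [setIntegral_prod _ hA]
    exact hKA
  have hBpart : (∫ p in W ×ˢ (Z (1/2)), ψ (b * p.1 * p.2) ∂(μ.prod μ))
      = if ‖b‖ ≤ 2 then (1/4 : ℂ) else 0 := by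
    have hB' : Integrable (fun p : ℚ_[2] × ℚ_[2] => ψ (b * p.1 * p.2))
        ((μ.restrict W).prod (μ.restrict (Z (1/2)))) := by
      rw [Measure.prod_restrict]
      exact hB
    rw [show (∫ p in W ×ˢ (Z (1/2)), ψ (b * p.1 * p.2) ∂(μ.prod μ))
        = ∫ p, ψ (b * p.1 * p.2) ∂((μ.restrict W).prod (μ.restrict (Z (1/2)))) by
      rw [Measure.prod_restrict]]
    rw [integral_prod_symm _ hB']
    have : ∀ y : ℚ_[2], (∫ x in W, ψ (b * x * y) ∂μ) = ∫ x in W, ψ (b * y * x) ∂μ := by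
      intro y
      apply setIntegral_congr_fun measW'
      intro x _
      ring_nf
    calc (∫ y in Z (1/2), ∫ x in W, ψ (b * x * y) ∂μ ∂μ)
        = ∫ y in Z (1/2), ∫ x in W, ψ (b * y * x) ∂μ ∂μ := by
          apply setIntegral_congr_fun (measZ (1/2))
          intro y _
          exact this y
      _ = if ‖b‖ ≤ 2 then (1/4 : ℂ) else 0 := KA μ hψadd hψtriv hψhalf hμ b
  rw [hApart, hBpart]
  split_ifs <;> norm_num

end J

end

end S13

open S13

/-- **Paper, Lemma 5.5(2).** The normalized local Whittaker function
`I₁(s,t) = ∫_{ℚ₂} J₁(b) ψ(-tb) min(1,‖b‖⁻¹)^s dμ(b)` (with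
`J₁(b) = ∫_{M₁} ψ(b x₁ x₂) d(μ×μ)`) converges absolutely for `s > 0` and equals `0` if
`‖t‖ > 1`, `(1/2)(1 - 2^{-s})` if `‖t‖ = 1`, and `(1/2)(1 + 2^{-s})` if `‖t‖ ≤ 1/2`. -/
theorem stmt13 [MeasurableSpace ℚ_[2]] [BorelSpace ℚ_[2]]
    (μ : Measure ℚ_[2]) [μ.IsAddHaarMeasure] [SigmaFinite μ]
    (hμ : μ {x : ℚ_[2] | ‖x‖ ≤ 1} = 1)
    (ψ : ℚ_[2] → ℂ) (hψcont : Continuous ψ)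
    (hψadd : ∀ x y : ℚ_[2], ψ (x + y) = ψ x * ψ y)
    (hψtriv : ∀ x : ℚ_[2], ‖x‖ ≤ 1 → ψ x = 1)
    (hψhalf : ψ (2⁻¹ : ℚ_[2]) = -1)
    (s : ℝ) (hs : 0 < s) (t : ℚ_[2]) :
    Integrable
      (fun b : ℚ_[2] =>
        (∫ p in Mset 1, ψ (b * p.1 * p.2) ∂(μ.prod μ)) * ψ (-(t * b))
          * (((min 1 ‖b‖⁻¹) ^ s : ℝ) : ℂ)) μ ∧
    (1 < ‖t‖ →
      (∫ b : ℚ_[2],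
        (∫ p in Mset 1, ψ (b * p.1 * p.2) ∂(μ.prod μ)) * ψ (-(t * b))
          * (((min 1 ‖b‖⁻¹) ^ s : ℝ) : ℂ) ∂μ) = 0) ∧
    (‖t‖ = 1 →
      (∫ b : ℚ_[2],
        (∫ p in Mset 1, ψ (b * p.1 * p.2) ∂(μ.prod μ)) * ψ (-(t * b))
          * (((min 1 ‖b‖⁻¹) ^ s : ℝ) : ℂ) ∂μ)
        = (1 / 2 : ℂ) * (1 - (((2 : ℝ) ^ (-s) : ℝ) : ℂ))) ∧
    (‖t‖ ≤ 1 / 2 →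
      (∫ b : ℚ_[2],
        (∫ p in Mset 1, ψ (b * p.1 * p.2) ∂(μ.prod μ)) * ψ (-(t * b))
          * (((min 1 ‖b‖⁻¹) ^ s : ℝ) : ℂ) ∂μ)
        = (1 / 2 : ℂ) * (1 + (((2 : ℝ) ^ (-s) : ℝ) : ℂ))) := by
  classical
  set m : ℚ_[2] → ℂ := fun b => (((min 1 ‖b‖⁻¹) ^ s : ℝ) : ℂ) with hm_def
  set C : ℂ := (((2:ℝ) ^ (-s) : ℝ) : ℂ) with hC_def
  have hJ : ∀ b : ℚ_[2], (∫ p in Mset 1, ψ (b * p.1 * p.2) ∂(μ.prod μ))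
      = if ‖b‖ ≤ 2 then (1/2:ℂ) else 0 :=
    fun b => Jval μ hψcont hψadd hψtriv hψhalf hμ b
  have hFeq : (fun b : ℚ_[2] =>
      (∫ p in Mset 1, ψ (b * p.1 * p.2) ∂(μ.prod μ)) * ψ (-(t * b)) * m b)
      = (Z 2).indicator (fun b => (1/2:ℂ) * ψ (-(t * b)) * m b) := by
    funext b
    rw [hJ b]
    by_cases hb : b ∈ Z 2
    · rw [Set.indicator_of_mem hb, if_pos (mem_Z.1 hb)]
    · rw [Set.indicator_of_notMem hb, if_neg (fun h => hb (mem_Z.2 h)), zero_mul, zero_mul]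
  have hm_meas : Measurable m := by
    have hrpow : Continuous fun x : ℝ => x ^ s := by
      rw [continuous_iff_continuousAt]
      intro x
      exact Real.continuousAt_rpow_const x s (Or.inr hs.le)
    exact Complex.continuous_ofReal.measurable.comp
      (hrpow.measurable.comp (measurable_const.min measurable_norm.inv))
  have hm_le : ∀ b : ℚ_[2], ‖m b‖ ≤ 1 := by
    intro b
    rw [hm_def]
    simp only [Complex.norm_real, Real.norm_eq_abs]
    have hmin0 : (0:ℝ) ≤ min 1 ‖b‖⁻¹ := le_min zero_le_one (inv_nonneg.2 (norm_nonneg b))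
    rw [abs_of_nonneg (Real.rpow_nonneg hmin0 s)]
    exact Real.rpow_le_one hmin0 (min_le_left _ _) hs.le
  have hψneg : ∀ b : ℚ_[2], ψ (-(t * b)) = ψ ((-t) * b) := by
    intro b; congr 1; ring
  have hg_meas : AEStronglyMeasurable (fun b : ℚ_[2] => (1/2:ℂ) * ψ (-(t * b)) * m b) μ := by
    apply Measurable.aestronglyMeasurable
    exact (measurable_const.mul (hψcont.measurable.comp (by fun_prop))).mul hm_meas
  have hg_bdd : ∀ b : ℚ_[2], ‖(1/2:ℂ) * ψ (-(t * b)) * m b‖ ≤ 1 := by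
    intro b
    rw [norm_mul, norm_mul]
    have h1 : ‖(1/2 : ℂ)‖ = 1/2 := by norm_num
    rw [h1, psi_norm_one hψadd hψtriv, mul_one]
    nlinarith [hm_le b, norm_nonneg (m b)]
  have hIntOn : IntegrableOn (fun b : ℚ_[2] => (1/2:ℂ) * ψ (-(t * b)) * m b) (Z 2) μ := by
    apply Measure.integrableOn_of_bounded (M := 1) (measure_Z_lt_top μ 2).ne hg_meas
    filter_upwards with b using hg_bdd b
  have hInt : Integrable (fun b : ℚ_[2] =>
      (∫ p in Mset 1, ψ (b * p.1 * p.2) ∂(μ.prod μ)) * ψ (-(t * b)) * m b) μ := by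
    rw [hFeq]
    exact hIntOn.integrable_indicator (measZ 2)
  have hsub1 : Z (1:ℝ) ⊆ Z (2:ℝ) := fun x hx => mem_Z.2 (le_trans (mem_Z.1 hx) one_le_two)
  have hsplitset : Z (2:ℝ) = Z 1 ∪ (Z 2 \ Z 1) := (Set.union_diff_cancel hsub1).symm
  have hmeasD : MeasurableSet (Z (2:ℝ) \ Z 1) := (measZ 2).diff (measZ 1)
  have hIntPsi : IntegrableOn (fun b : ℚ_[2] => ψ ((-t) * b)) (Z 2) μ := by
    apply Measure.integrableOn_of_bounded (M := 1) (measure_Z_lt_top μ 2).ne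
    · exact (hψcont.comp (by fun_prop)).aestronglyMeasurable
    · filter_upwards with b using le_of_eq (psi_norm_one hψadd hψtriv _)
  have hDpsi : (∫ b in Z 2 \ Z 1, ψ ((-t) * b) ∂μ)
      = (∫ b in Z 2, ψ ((-t) * b) ∂μ) - ∫ b in Z 1, ψ ((-t) * b) ∂μ := by
    have hsum : (∫ b in Z (2:ℝ), ψ ((-t) * b) ∂μ)
        = (∫ b in Z 1, ψ ((-t) * b) ∂μ) + ∫ b in Z 2 \ Z 1, ψ ((-t) * b) ∂μ := by
      conv_lhs => rw [hsplitset]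
      exact setIntegral_union Set.disjoint_sdiff_right hmeasD (hIntPsi.mono_set hsub1)
        (hIntPsi.mono_set Set.diff_subset)
    rw [hsum]; ring
  have h0ae : ∀ᵐ b ∂μ, b ≠ (0:ℚ_[2]) := by
    rw [ae_iff]
    have hset : {a : ℚ_[2] | ¬ a ≠ 0} = {0} := by ext a; simp
    rw [hset]
    exact measure_singleton 0
  have hz1 : (∫ b in Z 1, (1/2:ℂ) * ψ (-(t * b)) * m b ∂μ)
      = (1/2:ℂ) * ∫ b in Z 1, ψ ((-t) * b) ∂μ := by
    have hcong : (∫ b in Z 1, (1/2:ℂ) * ψ (-(t * b)) * m b ∂μ)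
        = ∫ b in Z 1, (1/2:ℂ) * ψ ((-t) * b) ∂μ := by
      apply setIntegral_congr_ae (measZ 1)
      filter_upwards [h0ae] with b hb hbZ
      have hb1 : ‖b‖ ≤ 1 := mem_Z.1 hbZ
      have hbpos : (0:ℝ) < ‖b‖ := norm_pos_iff.2 hb
      have h5 : (1:ℝ) ≤ ‖b‖⁻¹ := by
        rw [← one_div, le_div_iff₀ hbpos]
        linarith
      have hmb : m b = 1 := by
        rw [hm_def]
        simp only
        rw [min_eq_left h5, Real.one_rpow, Complex.ofReal_one]
      rw [hmb, mul_one, hψneg b]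
    rw [hcong, integral_const_mul]
  have hzD : (∫ b in Z 2 \ Z 1, (1/2:ℂ) * ψ (-(t * b)) * m b ∂μ)
      = (1/2:ℂ) * C * ∫ b in Z 2 \ Z 1, ψ ((-t) * b) ∂μ := by
    have hcong : ∀ b ∈ Z (2:ℝ) \ Z 1, (1/2:ℂ) * ψ (-(t * b)) * m b
        = ((1/2:ℂ) * C) * ψ ((-t) * b) := by
      intro b hb
      obtain ⟨hb2, hb1⟩ := hb
      have hbeq : ‖b‖ = 2 := by
        refine le_antisymm (mem_Z.1 hb2) ?_
        by_contra hlt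
        push_neg at hlt
        exact hb1 (mem_Z.2 (disc_one hlt))
      have hmb : m b = C := by
        rw [hm_def, hC_def]
        simp only
        rw [hbeq]
        rw [min_eq_right (by norm_num : (2:ℝ)⁻¹ ≤ 1)]
        rw [show ((2:ℝ)⁻¹) ^ s = (2:ℝ) ^ (-s) by
          rw [Real.inv_rpow (by norm_num : (0:ℝ) ≤ 2), ← Real.rpow_neg (by norm_num : (0:ℝ) ≤ 2)]]
      rw [hmb, hψneg b]
      ring
    rw [setIntegral_congr_fun hmeasD hcong, integral_const_mul]
  have hmain : (∫ b : ℚ_[2],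
      (∫ p in Mset 1, ψ (b * p.1 * p.2) ∂(μ.prod μ)) * ψ (-(t * b)) * m b ∂μ)
      = (1/2:ℂ) * (∫ b in Z 1, ψ ((-t) * b) ∂μ)
        + (1/2:ℂ) * C * ((∫ b in Z 2, ψ ((-t) * b) ∂μ) - ∫ b in Z 1, ψ ((-t) * b) ∂μ) := by
    rw [hFeq, integral_indicator (measZ 2)]
    have hsum : (∫ b in Z (2:ℝ), (1/2:ℂ) * ψ (-(t * b)) * m b ∂μ)
        = (∫ b in Z 1, (1/2:ℂ) * ψ (-(t * b)) * m b ∂μ)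
          + ∫ b in Z 2 \ Z 1, (1/2:ℂ) * ψ (-(t * b)) * m b ∂μ := by
      conv_lhs => rw [hsplitset]
      exact setIntegral_union Set.disjoint_sdiff_right hmeasD (hIntOn.mono_set hsub1)
        (hIntOn.mono_set Set.diff_subset)
    rw [hsum, hz1, hzD, hDpsi]
  have hG1 := G1 μ hψadd hψtriv hψhalf hμ (-t)
  have hG2 := G2 μ hψadd hψtriv hψhalf hμ (-t)
  rw [norm_neg] at hG1 hG2
  refine ⟨hInt, ?_, ?_, ?_⟩
  · intro ht
    rw [hmain, hG1, hG2, if_neg (by linarith), if_neg (by intro h; linarith)]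
    ring
  · intro ht
    rw [hmain, hG1, hG2, if_pos (le_of_eq ht), if_neg (by rw [ht]; norm_num)]
    ring
  · intro ht
    rw [hmain, hG1, hG2, if_pos (le_trans ht (by norm_num)), if_pos ht]
    ring
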